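/- arXiv:2401.11655 — 2 statements merged into one kernel-verified Lean document; each statement's English description precedes it below -/
import Mathlib

section
/- In the renewal setup, let 𝕊 be a finite set and let (r_k)_{k≥0} be 𝕊-valued random variables (the mode active on [t_k, t_{k+1})). For each i ∈ 𝕊 let λ_i : ℝ → ℝ be continuous with |λ_i(s)| ≤ L for all s and some constant L > 0, and suppose the per-interval integrals W_k = ∫_{t_{k−1}}^{t_k} λ_{r_{k−1}}(h) dh, k ≥ 1, form an i.i.d. integrable sequence with E[W₁] ≤ w̄. Let μ ≥ 1, c > 0, p > 0, C > 0 be constants with (w̄ + ln μ)/θ < 0. Suppose that for almost every ω there is a continuous trajectory x(ω,·) : [0,∞) → ℝⁿ and functions V_i : [0,∞) × ℝⁿ → ℝ such that: c·‖x(ω,t)‖^p ≤ V_{r(t)}(t, x(ω,t)) for all t ≥ 0, where r(t) = r_k on [t_k, t_{k+1}); 0 < V_{r_0}(0, x(ω,0)) ≤ C; for each k the map t ↦ V_{r_k}(t, x(ω,t)) is continuous on [t_k, t_{k+1}], differentiable on (t_k, t_{k+1}) with derivative ≤ λ_{r_k}(t)·V_{r_k}(t, x(ω,t)); and V_{r_k}(t_k,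 x(ω,t_k)) ≤ μ·V_{r_{k−1}}(t_k, x(ω,t_k)) for each k ≥ 1. Then, almost surely, limsup_{t→∞} (1/t)·ln‖x(t)‖ ≤ (w̄ + ln μ)/(θ·p) < 0; that is, the system is almost surely globally exponentially stable. -/
open Set Filter MeasureTheory ProbabilityTheory Topology

lemma gronwall_aux {a b : ℝ} (hab : a < b) {lamf f : ℝ → ℝ} (hlamc : Continuous lamf)
    (hfc : ContinuousOn f (Set.Icc a b)) (hfd : DifferentiableOn ℝ f (Set.Ioo a b))
    (hfd' : ∀ s ∈ Set.Ioo a b, deriv f s ≤ lamf s * f s) :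
    ∀ t ∈ Set.Icc a b, f t ≤ f a * Real.exp (∫ u in a..t, lamf u) := by
  set F : ℝ → ℝ := fun s => ∫ u in a..s, lamf u with hF
  have hFd : ∀ s, HasDerivAt F (lamf s) s := fun s =>
    (hlamc.integral_hasStrictDerivAt a s).hasDerivAt
  have hFcont : Continuous F := by
    rw [continuous_iff_continuousAt]; exact fun s => (hFd s).continuousAt
  set g : ℝ → ℝ := fun s => f s * Real.exp (-(F s)) with hg
  have hEd : ∀ s, HasDerivAt (fun u => Real.exp (-(F u))) (Real.exp (-(F s)) * (-(lamf s))) s :=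
    fun s => ((hFd s).neg).exp
  have hganti : AntitoneOn g (Set.Icc a b) := by
    apply antitoneOn_of_deriv_nonpos (convex_Icc a b)
    · exact hfc.mul ((Real.continuous_exp.comp hFcont.neg).continuousOn)
    · rw [interior_Icc]
      intro s hs
      exact ((hfd.differentiableAt (isOpen_Ioo.mem_nhds hs)).mul
        ((hEd s).differentiableAt)).differentiableWithinAt
    · rw [interior_Icc]
      intro s hs
      have h1 : HasDerivAt f (deriv f s) s :=
        (hfd.differentiableAt (isOpen_Ioo.mem_nhds hs)).hasDerivAt
      have h3 : HasDerivAt g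
          (deriv f s * Real.exp (-(F s)) + f s * (Real.exp (-(F s)) * (-(lamf s)))) s :=
        h1.mul (hEd s)
      rw [h3.deriv]
      have he := Real.exp_pos (-(F s))
      nlinarith [mul_le_mul_of_nonneg_right (hfd' s hs) he.le]
  intro t ht
  have h4 : g t ≤ g a := hganti (Set.left_mem_Icc.2 hab.le) ht ht.1
  have hFa : F a = 0 := intervalIntegral.integral_same
  have h5 : f t * Real.exp (-(F t)) ≤ f a := by simpa [hg, hFa] using h4
  calc f t = f t * Real.exp (-(F t)) * Real.exp (F t) := by
        rw [mul_assoc, ← Real.exp_add]; simp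
    _ ≤ f a * Real.exp (F t) := mul_le_mul_of_nonneg_right h5 (Real.exp_pos _).le

lemma pathwise (θ L μ c p C wbar m : ℝ) (hθpos : 0 < θ) (hμ : 1 ≤ μ) (hc : 0 < c)
    (hp : 0 < p) (hC : 0 < C) (hL : 0 < L) (hm : m ≤ wbar)
    (hdrift : (wbar + Real.log μ) / θ < 0)
    (t : ℕ → ℝ) (ht0 : t 0 = 0)
    (Sw : ℕ → ℝ) (hSpos : ∀ k, 0 < Sw (k + 1)) (htsucc : ∀ k, t (k + 1) = t k + Sw (k + 1))
    (hlimt : Tendsto (fun n : ℕ => t n / n) atTop (𝓝 θ))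
    (Ww : ℕ → ℝ)
    (hlimW : Tendsto (fun n : ℕ => (∑ i ∈ Finset.range n, Ww (i + 1)) / n) atTop (𝓝 m))
    (lamw : ℕ → ℝ → ℝ) (hlamc : ∀ k, Continuous (lamw k)) (hlamL : ∀ k s, |lamw k s| ≤ L)
    (hWint : ∀ k, Ww (k + 1) = ∫ h in (t k)..(t (k + 1)), lamw k h)
    (y : ℝ → ℝ) (hy : ∀ s, 0 ≤ y s)
    (Vw : ℕ → ℝ → ℝ)
    (hlow : ∀ k, ∀ s ∈ Set.Ico (t k) (t (k + 1)), c * y s ^ p ≤ Vw k s)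
    (hV0 : 0 < Vw 0 0 ∧ Vw 0 0 ≤ C)
    (hVc : ∀ k, ContinuousOn (Vw k) (Set.Icc (t k) (t (k + 1))))
    (hVd : ∀ k, DifferentiableOn ℝ (Vw k) (Set.Ioo (t k) (t (k + 1))))
    (hVd' : ∀ k, ∀ s ∈ Set.Ioo (t k) (t (k + 1)), deriv (Vw k) s ≤ lamw k s * Vw k s)
    (hjump : ∀ k, Vw (k + 1) (t (k + 1)) ≤ μ * Vw k (t (k + 1)))
    (ε : ℝ) (hε : 0 < ε) :
    ∀ᶠ s in atTop, y s ≠ 0 →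
      Real.log (y s) / s ≤ (wbar + Real.log μ) / (θ * p) + ε := by
  classical
  have hμ0 : (0:ℝ) < μ := lt_of_lt_of_le one_pos hμ
  set Sg : ℕ → ℝ := fun k => ∑ i ∈ Finset.range k, Ww (i + 1) with hSg
  have htmono : StrictMono t := strictMono_nat_of_lt_succ (fun k => by
    rw [htsucc k]; linarith [hSpos k])
  have htpos : ∀ k, 0 < t (k + 1) := fun k => by
    have := htmono (Nat.zero_lt_succ k); rwa [ht0] at this
  have htlt : ∀ k, t k < t (k + 1) := fun k => htmono (Nat.lt_succ_self k)
  -- Grönwall on each interval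
  have hVt : ∀ k, ∀ s ∈ Set.Icc (t k) (t (k + 1)),
      Vw k s ≤ Vw k (t k) * Real.exp (∫ u in (t k)..s, lamw k u) := fun k =>
    gronwall_aux (htlt k) (hlamc k) (hVc k) (hVd k) (hVd' k)
  -- inductive bound at renewal times
  have hind : ∀ k, Vw k (t k) ≤ C * μ ^ k * Real.exp (Sg k) := by
    intro k
    induction k with
    | zero => simpa [ht0, hSg] using hV0.2
    | succ k ih =>
      have h2 := hVt k (t (k + 1)) (Set.right_mem_Icc.2 (htlt k).le)
      rw [← hWint k] at h2
      calc Vw (k + 1) (t (k + 1)) ≤ μ * Vw k (t (k + 1)) := hjump k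
        _ ≤ μ * (Vw k (t k) * Real.exp (Ww (k + 1))) :=
            mul_le_mul_of_nonneg_left h2 hμ0.le
        _ ≤ μ * ((C * μ ^ k * Real.exp (Sg k)) * Real.exp (Ww (k + 1))) :=
            mul_le_mul_of_nonneg_left
              (mul_le_mul_of_nonneg_right ih (Real.exp_pos _).le) hμ0.le
        _ = C * μ ^ (k + 1) * Real.exp (Sg (k + 1)) := by
            simp only [hSg]; rw [Finset.sum_range_succ, Real.exp_add, pow_succ]; ring
  -- pointwise bound on each interval
  have hbound : ∀ k, ∀ s ∈ Set.Icc (t k) (t (k + 1)),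
      Vw k s ≤ C * μ ^ k * Real.exp (Sg k + L * Sw (k + 1)) := by
    intro k s hs
    have hint : (∫ u in (t k)..s, lamw k u) ≤ L * Sw (k + 1) := by
      have h1 := intervalIntegral.norm_integral_le_of_norm_le_const
        (a := t k) (b := s) (C := L) (f := lamw k) (fun u _ => by
          simpa [Real.norm_eq_abs] using hlamL k u)
      have h2 : |s - t k| = s - t k := abs_of_nonneg (by linarith [hs.1])
      have h3 : s - t k ≤ Sw (k + 1) := by
        have := hs.2; rw [htsucc k] at this; linarith
      calc (∫ u in (t k)..s, lamw k u) ≤ |∫ u in (t k)..s, lamw k u| := le_abs_self _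
        _ ≤ L * |s - t k| := by simpa [Real.norm_eq_abs] using h1
        _ ≤ L * Sw (k + 1) := by rw [h2]; exact mul_le_mul_of_nonneg_left h3 hL.le
    have hpos : (0:ℝ) ≤ C * μ ^ k * Real.exp (Sg k) :=
      (mul_pos (mul_pos hC (pow_pos hμ0 k)) (Real.exp_pos _)).le
    calc Vw k s ≤ Vw k (t k) * Real.exp (∫ u in (t k)..s, lamw k u) := hVt k s hs
      _ ≤ (C * μ ^ k * Real.exp (Sg k)) * Real.exp (∫ u in (t k)..s, lamw k u) :=
          mul_le_mul_of_nonneg_right (hind k) (Real.exp_pos _).le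
      _ ≤ (C * μ ^ k * Real.exp (Sg k)) * Real.exp (L * Sw (k + 1)) :=
          mul_le_mul_of_nonneg_left (Real.exp_le_exp.2 hint) hpos
      _ = C * μ ^ k * Real.exp (Sg k + L * Sw (k + 1)) := by rw [Real.exp_add]; ring
  -- logarithmic bound
  have hlog : ∀ k, ∀ s ∈ Set.Ico (t k) (t (k + 1)), y s ≠ 0 →
      p * Real.log (y s) ≤ Real.log C + k * Real.log μ + Sg k + L * Sw (k + 1)
        - Real.log c := by
    intro k s hs hys
    have hy0 : 0 < y s := lt_of_le_of_ne (hy s) (Ne.symm hys)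
    have hyp : 0 < y s ^ p := Real.rpow_pos_of_pos hy0 p
    have h1 : c * y s ^ p ≤ C * μ ^ k * Real.exp (Sg k + L * Sw (k + 1)) :=
      le_trans (hlow k s hs) (hbound k s ⟨hs.1, hs.2.le⟩)
    have h2 : Real.log (c * y s ^ p) ≤
        Real.log (C * μ ^ k * Real.exp (Sg k + L * Sw (k + 1))) :=
      Real.log_le_log (by positivity) h1
    rw [Real.log_mul hc.ne' hyp.ne', Real.log_rpow hy0,
      Real.log_mul (by positivity) (Real.exp_ne_zero _),
      Real.log_mul hC.ne' (by positivity), Real.log_pow, Real.log_exp] at h2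
    push_cast at h2 ⊢
    linarith
  -- limits
  have hN : Tendsto (fun n : ℕ => (n : ℝ)) atTop atTop := tendsto_natCast_atTop_atTop
  have hne : ∀ᶠ n : ℕ in atTop, (1:ℕ) ≤ n := eventually_ge_atTop 1
  have htop : Tendsto t atTop atTop := by
    refine Tendsto.congr' ?_ (hlimt.pos_mul_atTop hθpos hN)
    filter_upwards [hne] with n hn
    have : (n:ℝ) ≠ 0 := Nat.cast_ne_zero.2 (by omega)
    field_simp
  have htkpos : ∀ k, 1 ≤ k → 0 < t k := by
    intro k hk
    have := htmono (Nat.lt_of_lt_of_le Nat.zero_lt_one hk)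
    rwa [ht0] at this
  have hinv : Tendsto (fun n : ℕ => (n : ℝ) / t n) atTop (𝓝 θ⁻¹) := by
    refine Tendsto.congr' ?_ (hlimt.inv₀ hθpos.ne')
    filter_upwards with n
    rw [inv_div]
  have hinv1 : Tendsto (fun n : ℕ => (n : ℝ) / t (n + 1)) atTop (𝓝 θ⁻¹) := by
    have h1 : Tendsto (fun n : ℕ => ((n : ℝ) + 1) / t (n + 1)) atTop (𝓝 θ⁻¹) := by
      refine (hinv.comp (tendsto_add_atTop_nat 1)).congr fun n => ?_
      simp only [Function.comp_apply]
      push_cast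
      ring_nf
    have h2 : Tendsto (fun n : ℕ => (n : ℝ) / ((n : ℝ) + 1)) atTop (𝓝 1) := by
      have := (tendsto_const_nhds (x := (1:ℝ)) (f := atTop)).sub
        tendsto_one_div_add_atTop_nhds_zero_nat
      rw [sub_zero] at this
      refine Tendsto.congr' ?_ this
      filter_upwards with n
      have h : ((n : ℝ) + 1) ≠ 0 := by positivity
      field_simp
      ring
    have := h2.mul h1
    rw [one_mul] at this
    refine Tendsto.congr' ?_ this
    filter_upwards with n
    have h : ((n : ℝ) + 1) ≠ 0 := by positivity
    rw [div_mul_div_comm]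
    rw [mul_comm ((n:ℝ)+1) (t (n+1))]
    rw [mul_div_mul_right _ _ h]
  have hS0 : Tendsto (fun n : ℕ => Sw (n + 1) / n) atTop (𝓝 0) := by
    have h3 : Tendsto (fun n : ℕ => t (n + 1) / ((n : ℝ) + 1)) atTop (𝓝 θ) := by
      refine (hlimt.comp (tendsto_add_atTop_nat 1)).congr fun n => ?_
      simp only [Function.comp_apply]
      push_cast
      ring_nf
    have h4 : Tendsto (fun n : ℕ => ((n : ℝ) + 1) / n) atTop (𝓝 1) := by
      have h5 : Tendsto (fun n : ℕ => 1 + 1 / (n : ℝ)) atTop (𝓝 1) := by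
        have := (tendsto_const_nhds (x := (1:ℝ)) (f := atTop)).add
          tendsto_one_div_atTop_nhds_zero_nat
        simpa using this
      refine Tendsto.congr' ?_ h5
      filter_upwards [hne] with n hn
      have : (n:ℝ) ≠ 0 := Nat.cast_ne_zero.2 (by omega)
      field_simp
    have h6 : Tendsto (fun n : ℕ => t (n + 1) / n) atTop (𝓝 θ) := by
      have := h4.mul h3
      rw [one_mul] at this
      refine Tendsto.congr' ?_ this
      filter_upwards [hne] with n hn
      have hn0 : (n:ℝ) ≠ 0 := Nat.cast_ne_zero.2 (by omega)
      have h : ((n : ℝ) + 1) ≠ 0 := by positivity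
      field_simp
    have := h6.sub hlimt
    rw [sub_self] at this
    refine Tendsto.congr' ?_ this
    filter_upwards with n
    rw [htsucc n]
    ring
  -- the bounding sequence
  set q : ℕ → ℝ := fun k => (|Real.log C - Real.log c| + L * Sw (k + 1)) / (p * t k)
      + ((k : ℝ) * Real.log μ + Sg k) / (p * t (k + 1)) with hq
  have hSgk : Tendsto (fun k : ℕ => Real.log μ + Sg k / k) atTop (𝓝 (Real.log μ + m)) :=
    tendsto_const_nhds.add hlimW
  have hqlim : Tendsto q atTop (𝓝 ((Real.log μ + m) / (θ * p))) := by
    have hpt : Tendsto (fun k : ℕ => p * t k) atTop atTop := htop.const_mul_atTop hp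
    have t1a : Tendsto (fun k : ℕ => |Real.log C - Real.log c| / (p * t k)) atTop (𝓝 0) :=
      tendsto_const_nhds.div_atTop hpt
    have t1b : Tendsto (fun k : ℕ => L * Sw (k + 1) / (p * t k)) atTop (𝓝 0) := by
      have := ((hS0.mul hinv).const_mul (L / p))
      simp only [zero_mul, mul_zero] at this
      refine Tendsto.congr' ?_ this
      filter_upwards [hne] with k hk
      have hk0 : (k:ℝ) ≠ 0 := Nat.cast_ne_zero.2 (by omega)
      have ht0' : t k ≠ 0 := (htkpos k hk).ne'
      field_simp
      all_goals first | ring | tauto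
    have t2 : Tendsto (fun k : ℕ => ((k : ℝ) * Real.log μ + Sg k) / (p * t (k + 1)))
        atTop (𝓝 (1 / p * (θ⁻¹ * (Real.log μ + m)))) := by
      have := ((hinv1.mul hSgk).const_mul (1 / p))
      refine Tendsto.congr' ?_ this
      filter_upwards [hne] with k hk
      have hk0 : (k:ℝ) ≠ 0 := Nat.cast_ne_zero.2 (by omega)
      have ht1 : t (k + 1) ≠ 0 := (htpos k).ne'
      field_simp
      all_goals first | ring | tauto
    have := (t1a.add t1b).add t2
    rw [add_zero, zero_add] at this
    have heq : 1 / p * (θ⁻¹ * (Real.log μ + m)) = (Real.log μ + m) / (θ * p) := by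
      field_simp
    rw [heq] at this
    refine Tendsto.congr' ?_ this
    filter_upwards with k
    simp only [hq]
    ring
  -- choose the threshold index
  set A : ℝ := (wbar + Real.log μ) / (θ * p) with hA
  have hθp : 0 < θ * p := mul_pos hθpos hp
  have hwneg : wbar + Real.log μ < 0 := by
    rcases div_neg_iff.1 hdrift with ⟨h1, h2⟩ | ⟨h1, h2⟩
    · linarith
    · exact h1
  have hlimA : (Real.log μ + m) / (θ * p) ≤ A := by
    rw [hA]
    exact (div_le_div_iff_of_pos_right hθp).2 (by linarith)
  have hev2 : ∀ᶠ k in atTop, q k < A + ε :=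
    hqlim.eventually_lt_const (by linarith)
  have hev1 : ∀ᶠ k in atTop, Real.log μ + Sg k / k < 0 :=
    hSgk.eventually_lt_const (by linarith)
  obtain ⟨K0, hK0⟩ := ((hev1.and hev2).and hne).exists_forall_of_atTop
  set K : ℕ := K0 + 1 with hK
  have hKprop : ∀ k, K ≤ k → (Real.log μ + Sg k / k < 0 ∧ q k < A + ε) ∧ 1 ≤ k :=
    fun k hk => hK0 k (le_trans (Nat.le_succ K0) hk)
  have htK : 0 < t K := htkpos K (Nat.le_add_left 1 K0)
  rw [Filter.eventually_atTop]
  refine ⟨t K, fun s hs hys => ?_⟩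
  have hspos : 0 < s := lt_of_lt_of_le htK hs
  -- find the interval containing s
  have hex : ∃ j, s < t j := (htop.eventually_gt_atTop s).exists
  set j0 := Nat.find hex with hj0
  have hj0spec : s < t j0 := Nat.find_spec hex
  have hj0ne : j0 ≠ 0 := by
    intro h
    rw [h, ht0] at hj0spec
    linarith
  obtain ⟨k, hkeq⟩ := Nat.exists_eq_succ_of_ne_zero hj0ne
  have hks : t k ≤ s := by
    have := Nat.find_min hex (by omega : k < j0)
    push_neg at this
    exact this
  have hsk1 : s < t (k + 1) := by rw [hkeq] at hj0spec; exact hj0spec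
  have hkK : K ≤ k := by
    by_contra h
    push_neg at h
    have : t (k + 1) ≤ t K := htmono.monotone (by omega)
    linarith
  obtain ⟨⟨hneg, hqk⟩, hk1⟩ := hKprop k hkK
  have htk : 0 < t k := htkpos k hk1
  -- the log bound
  have hplog := hlog k s ⟨hks, hsk1⟩ hys
  -- numerator manipulations
  have hnum1 : Real.log C + (k:ℝ) * Real.log μ + Sg k + L * Sw (k + 1) - Real.log c
      = (Real.log C - Real.log c + L * Sw (k + 1)) + ((k:ℝ) * Real.log μ + Sg k) := by ring
  have hkpos : (0:ℝ) < (k:ℝ) := by exact_mod_cast hk1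
  have hnegk : (k:ℝ) * Real.log μ + Sg k ≤ 0 := by
    have h1 : (k:ℝ) * (Real.log μ + Sg k / k) < 0 :=
      mul_neg_of_pos_of_neg hkpos hneg
    have h2 : (k:ℝ) * (Real.log μ + Sg k / k) = (k:ℝ) * Real.log μ + Sg k := by
      field_simp
    rw [h2] at h1
    linarith
  have hps : 0 < p * s := mul_pos hp hspos
  have hstep1 : Real.log (y s) / s =
      (p * Real.log (y s)) / (p * s) := by
    rw [mul_div_mul_left _ _ hp.ne']
  have hstep2 : (p * Real.log (y s)) / (p * s) ≤
      (Real.log C - Real.log c + L * Sw (k + 1)) / (p * s)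
        + ((k:ℝ) * Real.log μ + Sg k) / (p * s) := by
    rw [← add_div]
    exact (div_le_div_iff_of_pos_right hps).2 (by linarith)
  have hstep3 : (Real.log C - Real.log c + L * Sw (k + 1)) / (p * s) ≤
      (|Real.log C - Real.log c| + L * Sw (k + 1)) / (p * t k) := by
    apply div_le_div₀
    · have := abs_nonneg (Real.log C - Real.log c)
      have := (hSpos k)
      nlinarith
    · have := le_abs_self (Real.log C - Real.log c)
      linarith
    · exact mul_pos hp htk
    · exact mul_le_mul_of_nonneg_left hks hp.le
  have hstep4 : ((k:ℝ) * Real.log μ + Sg k) / (p * s) ≤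
      ((k:ℝ) * Real.log μ + Sg k) / (p * t (k + 1)) := by
    rw [div_le_div_iff₀ hps (mul_pos hp (htpos k))]
    exact mul_le_mul_of_nonpos_left (mul_le_mul_of_nonneg_left hsk1.le hp.le) hnegk
  calc Real.log (y s) / s = (p * Real.log (y s)) / (p * s) := hstep1
    _ ≤ (Real.log C - Real.log c + L * Sw (k + 1)) / (p * s)
        + ((k:ℝ) * Real.log μ + Sg k) / (p * s) := hstep2
    _ ≤ (|Real.log C - Real.log c| + L * Sw (k + 1)) / (p * t k)
        + ((k:ℝ) * Real.log μ + Sg k) / (p * t (k + 1)) := add_le_add hstep3 hstep4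
    _ = q k := by rw [hq]
    _ ≤ A + ε := hqk.le


/-- The renewal (arrival) times: `renewalTime S k ω = S 1 ω + ⋯ + S k ω`, with
`renewalTime S 0 ω = 0`. -/
noncomputable def renewalTime {Ω : Type*} (S : ℕ → Ω → ℝ) (k : ℕ) (ω : Ω) : ℝ :=
  ∑ j ∈ Finset.Icc 1 k, S j ω

lemma renewalTime_eq_range {Ω : Type*} (S : ℕ → Ω → ℝ) (k : ℕ) (ω : Ω) :
    renewalTime S k ω = ∑ i ∈ Finset.range k, S (i + 1) ω := by
  rw [renewalTime, ← Finset.Ico_add_one_right_eq_Icc, Finset.sum_Ico_eq_sum_range]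
  simp [add_comm]

/-- Almost-sure global exponential stability for time-varying systems under
renewal-process switching: with mode-dependent indefinite Lyapunov rates `λ_i` whose
per-dwell-interval integrals `W_k` are i.i.d. with mean at most `w̄`, and a common jump
factor `μ` at switching times, if `(w̄ + ln μ)/θ < 0` then almost surely
`limsup (1/t) ln ‖x t‖ ≤ (w̄ + ln μ)/(θ·p) < 0` (in ε-form, ignoring times where
`x t = 0`). -/
theorem stmt_14 {Ω : Type*} [MeasurableSpace Ω] (P : Measure Ω) [IsProbabilityMeasure P]
    {𝕊 : Type*} [Fintype 𝕊] (n : ℕ)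
    -- the i.i.d. dwell times
    (S : ℕ → Ω → ℝ) (hSmeas : ∀ k, Measurable (S k))
    (hSindep : iIndepFun S P)
    (hSident : ∀ k ≥ 1, IdentDistrib (S k) (S 1) P P)
    (hSpos : ∀ᵐ ω ∂P, 0 < S 1 ω)
    (hSint : Integrable (S 1) P)
    (θ : ℝ) (hθpos : 0 < θ) (hθ : (∫ ω, S 1 ω ∂P) = θ)
    -- the random modes
    (r : ℕ → Ω → 𝕊)
    -- the mode-dependent rates, continuous and uniformly bounded
    (lam : 𝕊 → ℝ → ℝ) (hlam : ∀ i, Continuous (lam i))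
    (L : ℝ) (hL : 0 < L) (hlamL : ∀ i, ∀ s : ℝ, |lam i s| ≤ L)
    -- the per-interval integrals form an i.i.d. integrable sequence with mean `≤ w̄`
    (W : ℕ → Ω → ℝ) (hWmeas : ∀ k, Measurable (W k))
    (hW : ∀ᵐ ω ∂P, ∀ k, W (k + 1) ω =
      ∫ h in (renewalTime S k ω)..(renewalTime S (k + 1) ω), lam (r k ω) h)
    (hWindep : iIndepFun W P)
    (hWident : ∀ k ≥ 1, IdentDistrib (W k) (W 1) P P)
    (hWint : Integrable (W 1) P)
    (wbar : ℝ) (hwbar : (∫ ω, W 1 ω ∂P) ≤ wbar)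
    -- constants
    (μ c p C : ℝ) (hμ : 1 ≤ μ) (hc : 0 < c) (hp : 0 < p) (hC : 0 < C)
    (hdrift : (wbar + Real.log μ) / θ < 0)
    -- pathwise trajectory and Lyapunov functions
    (x : Ω → ℝ → EuclideanSpace ℝ (Fin n))
    (V : Ω → 𝕊 → ℝ → EuclideanSpace ℝ (Fin n) → ℝ)
    (hx_cont : ∀ᵐ ω ∂P, ContinuousOn (x ω) (Set.Ici 0))
    (hlow : ∀ᵐ ω ∂P, ∀ k, ∀ s ∈ Set.Ico (renewalTime S k ω) (renewalTime S (k + 1) ω),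
      c * ‖x ω s‖ ^ p ≤ V ω (r k ω) s (x ω s))
    (hV0 : ∀ᵐ ω ∂P, 0 < V ω (r 0 ω) 0 (x ω 0) ∧ V ω (r 0 ω) 0 (x ω 0) ≤ C)
    -- Lyapunov condition (ii)
    (hV_cont : ∀ᵐ ω ∂P, ∀ k, ContinuousOn (fun s => V ω (r k ω) s (x ω s))
      (Set.Icc (renewalTime S k ω) (renewalTime S (k + 1) ω)))
    (hV_diff : ∀ᵐ ω ∂P, ∀ k, DifferentiableOn ℝ (fun s => V ω (r k ω) s (x ω s))
      (Set.Ioo (renewalTime S k ω) (renewalTime S (k + 1) ω)))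
    (hV_deriv : ∀ᵐ ω ∂P, ∀ k,
      ∀ s ∈ Set.Ioo (renewalTime S k ω) (renewalTime S (k + 1) ω),
        deriv (fun s' => V ω (r k ω) s' (x ω s')) s ≤
          lam (r k ω) s * V ω (r k ω) s (x ω s))
    -- Lyapunov condition (iii)
    (hjump : ∀ᵐ ω ∂P, ∀ k,
      V ω (r (k + 1) ω) (renewalTime S (k + 1) ω) (x ω (renewalTime S (k + 1) ω)) ≤
        μ * V ω (r k ω) (renewalTime S (k + 1) ω) (x ω (renewalTime S (k + 1) ω))) :
    ∀ᵐ ω ∂P, ∀ ε > (0 : ℝ), ∀ᶠ s in Filter.atTop,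
      x ω s ≠ 0 → Real.log ‖x ω s‖ / s ≤ (wbar + Real.log μ) / (θ * p) + ε := by
  -- strong law for the dwell times
  have hSL : ∀ᵐ ω ∂P, Tendsto (fun n : ℕ => renewalTime S n ω / n) atTop (𝓝 θ) := by
    have := strong_law_ae_real (fun i => S (i + 1)) hSint
      (fun i j hij => hSindep.indepFun (by omega))
      (fun i => hSident (i + 1) (by omega))
    rw [hθ] at this
    filter_upwards [this] with ω hω
    refine hω.congr fun n => ?_
    rw [renewalTime_eq_range]
  -- strong law for the per-interval integrals
  have hWL : ∀ᵐ ω ∂P, Tendsto (fun n : ℕ => (∑ i ∈ Finset.range n, W (i + 1) ω) / n)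
      atTop (𝓝 (∫ ω, W 1 ω ∂P)) :=
    strong_law_ae_real (fun i => W (i + 1)) hWint
      (fun i j hij => hWindep.indepFun (by omega))
      (fun i => hWident (i + 1) (by omega))
  -- a.s. positivity of all dwell times
  have hSpos_all : ∀ᵐ ω ∂P, ∀ k : ℕ, 0 < S (k + 1) ω := by
    rw [ae_all_iff]
    intro k
    exact ((hSident (k + 1) (by omega)).symm.ae_snd (p := fun x => 0 < x)
      measurableSet_Ioi hSpos)
  filter_upwards [hSL, hWL, hSpos_all, hW, hlow, hV0, hV_cont, hV_diff, hV_deriv, hjump]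
    with ω h1 h2 h3 h4 h5 h6 h7 h8 h9 h10
  intro ε hε
  have key := pathwise θ L μ c p C wbar (∫ ω, W 1 ω ∂P) hθpos hμ hc hp hC hL hwbar hdrift
    (fun k => renewalTime S k ω) (by simp [renewalTime_eq_range])
    (fun k => S k ω) (fun k => h3 k)
    (fun k => by
      show renewalTime S (k + 1) ω = renewalTime S k ω + S (k + 1) ω
      rw [renewalTime_eq_range, renewalTime_eq_range, Finset.sum_range_succ])
    h1 (fun k => W k ω) h2
    (fun k => lam (r k ω)) (fun k => hlam (r k ω)) (fun k s => hlamL (r k ω) s)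
    h4 (fun s => ‖x ω s‖) (fun s => norm_nonneg _)
    (fun k s => V ω (r k ω) s (x ω s))
    h5 h6 h7 h8 h9 h10 ε hε
  filter_upwards [key] with s hs hxs
  exact hs (by simpa using hxs)
end

section
/- In the renewal setup, let 𝕊 be a finite set, let (ξ_k)_{k≥0} be an i.i.d. 𝕊-valued sequence with P[ξ₀ = i] = p_i, independent of (S(k))_{k≥1}, and let λ : 𝕊 → ℝ assign a constant λ_i to each mode; define r(t) = ξ_k for t ∈ [t_k, t_{k+1}). Let μ ≥ 1 be a constant with Σ_{i∈𝕊} p_i·λ_i + (ln μ)/θ < 0, and let α₁, α₂ be class-K∞ functions. Suppose that for almost every ω there is a continuous trajectory x(ω,·) : [0,∞) → ℝⁿ and functions V_i : ℝⁿ → ℝ such that: α₁(‖y‖) ≤ V_i(y) ≤ α₂(‖y‖) for all i ∈ 𝕊 and y ∈ ℝⁿ; V_i(y) ≤ μ·V_j(y) for all i, j ∈ 𝕊 and y ∈ ℝⁿ; and for each k the map t ↦ V_{ξ_k}(x(ω,t)) is continuous on [t_k, t_{k+1}], differentiable on (t_k, t_{k+1}), with derivative ≤ λ_{ξ_k}·V_{ξ_k}(x(ω,t)).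 Then P[ x(t) → 0 as t → ∞ ] = 1. -/
open Set Filter MeasureTheory ProbabilityTheory
open Topology

/-- A function `α : [0,∞) → [0,∞)` is of class K∞ if it is continuous, strictly
increasing, vanishes at `0`, and tends to infinity. -/
def IsClassKInf (α : ℝ → ℝ) : Prop :=
  ContinuousOn α (Set.Ici 0) ∧ StrictMonoOn α (Set.Ici 0) ∧ α 0 = 0 ∧
    (∀ s ≥ (0 : ℝ), 0 ≤ α s) ∧ Filter.Tendsto α Filter.atTop Filter.atTop

lemma gronwall_aux_s16 {f : ℝ → ℝ} {a b lam : ℝ}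
    (hc : ContinuousOn f (Set.Icc a b)) (hd : DifferentiableOn ℝ f (Set.Ioo a b))
    (hderiv : ∀ s ∈ Set.Ioo a b, deriv f s ≤ lam * f s) :
    ∀ s ∈ Set.Icc a b, f s ≤ f a * Real.exp (lam * (s - a)) := by
  intro s hs
  have hab : a ≤ b := le_trans hs.1 hs.2
  set g : ℝ → ℝ := fun u => f u * Real.exp (-lam * u) with hg
  have hexp : ∀ u : ℝ, HasDerivAt (fun v => Real.exp (-lam * v))
      (Real.exp (-lam * u) * (-lam)) u := by
    intro u
    have h1 : HasDerivAt (fun v : ℝ => -lam * v) (-lam) u := by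
      simpa using (hasDerivAt_id u).const_mul (-lam)
    simpa using h1.exp
  have hgd : ∀ u ∈ Set.Ioo a b, DifferentiableAt ℝ f u := by
    intro u hu
    exact (hd u hu).differentiableAt (isOpen_Ioo.mem_nhds hu)
  have hganti : AntitoneOn g (Set.Icc a b) := by
    apply antitoneOn_of_deriv_nonpos (convex_Icc a b)
    · exact hc.mul (Real.continuous_exp.comp (continuous_const.mul continuous_id)).continuousOn
    · rw [interior_Icc]
      intro u hu
      exact ((hgd u hu).mul (hexp u).differentiableAt).differentiableWithinAt
    · rw [interior_Icc]
      intro u hu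
      have hder : HasDerivAt g (deriv f u * Real.exp (-lam * u)
          + f u * (Real.exp (-lam * u) * (-lam))) u :=
        ((hgd u hu).hasDerivAt).mul (hexp u)
      rw [hder.deriv]
      have h2 := hderiv u hu
      have h3 : (0:ℝ) < Real.exp (-lam * u) := Real.exp_pos _
      nlinarith [mul_le_mul_of_nonneg_right h2 h3.le]
  have hga : g s ≤ g a := hganti (Set.left_mem_Icc.mpr hab) hs hs.1
  have h4 : (0:ℝ) < Real.exp (-lam * s) := Real.exp_pos _
  have h5 := mul_le_mul_of_nonneg_right hga (Real.exp_pos (lam * s)).le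
  simp only [hg] at h5
  rw [mul_assoc, mul_assoc, ← Real.exp_add, ← Real.exp_add] at h5
  have e1 : -lam * s + lam * s = 0 := by ring
  have e2 : -lam * a + lam * s = lam * (s - a) := by ring
  rw [e1, e2, Real.exp_zero, mul_one] at h5
  exact h5



lemma indep_mul_aux {Ω : Type*} [MeasurableSpace Ω] (P : Measure Ω)
    {𝕊 : Type*} [Fintype 𝕊] [MeasurableSpace 𝕊] [MeasurableSingletonClass 𝕊]
    (S : ℕ → Ω → ℝ) (hSmeas : ∀ k, Measurable (S k))
    (hSindep : iIndepFun S P)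
    (ξ : ℕ → Ω → 𝕊) (hξmeas : ∀ k, Measurable (ξ k))
    (hξindep : iIndepFun ξ P)
    (hξS : IndepFun (fun ω k => ξ k ω) (fun ω k => S k ω) P)
    (lam : 𝕊 → ℝ) {i j : ℕ} (hij : i ≠ j) :
    IndepFun (fun ω => lam (ξ i ω) * S (i+1) ω) (fun ω => lam (ξ j ω) * S (j+1) ω) P := by
  rw [indepFun_iff_measure_inter_preimage_eq_mul]
  intro A B hA hB
  -- preimage sets in ℝ for each mode
  set As : 𝕊 → Set ℝ := fun s => (fun r => lam s * r) ⁻¹' A with hAs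
  set Bs : 𝕊 → Set ℝ := fun t => (fun r => lam t * r) ⁻¹' B with hBs
  have hAsm : ∀ s, MeasurableSet (As s) := fun s => (measurable_const_mul (lam s)) hA
  have hBsm : ∀ t, MeasurableSet (Bs t) := fun t => (measurable_const_mul (lam t)) hB
  set f1 : 𝕊 → Set Ω := fun s => ξ i ⁻¹' {s} ∩ S (i+1) ⁻¹' (As s) with hf1
  set f2 : 𝕊 → Set Ω := fun t => ξ j ⁻¹' {t} ∩ S (j+1) ⁻¹' (Bs t) with hf2
  have hf1m : ∀ s, MeasurableSet (f1 s) := fun s =>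
    ((hξmeas i (measurableSet_singleton s)).inter (hSmeas (i+1) (hAsm s)))
  have hf2m : ∀ t, MeasurableSet (f2 t) := fun t =>
    ((hξmeas j (measurableSet_singleton t)).inter (hSmeas (j+1) (hBsm t)))
  have hU1 : (fun ω => lam (ξ i ω) * S (i+1) ω) ⁻¹' A = ⋃ s, f1 s := by
    ext ω
    simp only [Set.mem_preimage, Set.mem_iUnion, hf1, Set.mem_inter_iff,
      Set.mem_singleton_iff, hAs]
    exact ⟨fun h => ⟨ξ i ω, rfl, h⟩, fun ⟨s, hs, h⟩ => by rw [← hs] at h; exact h⟩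
  have hU2 : (fun ω => lam (ξ j ω) * S (j+1) ω) ⁻¹' B = ⋃ t, f2 t := by
    ext ω
    simp only [Set.mem_preimage, Set.mem_iUnion, hf2, Set.mem_inter_iff,
      Set.mem_singleton_iff, hBs]
    exact ⟨fun h => ⟨ξ j ω, rfl, h⟩, fun ⟨t, ht, h⟩ => by rw [← ht] at h; exact h⟩
  -- the key factorization from hξS
  have hfact := (indepFun_iff_measure_inter_preimage_eq_mul.mp hξS)
  -- single-index factorizations
  have hsingle : ∀ (k : ℕ) (s : 𝕊) (C : Set ℝ), MeasurableSet C →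
      P (ξ k ⁻¹' {s} ∩ S (k+1) ⁻¹' C) = P (ξ k ⁻¹' {s}) * P (S (k+1) ⁻¹' C) := by
    intro k s C hC
    have h := hfact ((fun v : ℕ → 𝕊 => v k) ⁻¹' {s}) ((fun w : ℕ → ℝ => w (k+1)) ⁻¹' C)
      ((measurable_pi_apply k) (measurableSet_singleton s)) ((measurable_pi_apply (k+1)) hC)
    exact h
  -- double factorization
  have hdouble : ∀ s t, P (f1 s ∩ f2 t) = P (ξ i ⁻¹' {s}) * P (S (i+1) ⁻¹' (As s))
      * (P (ξ j ⁻¹' {t}) * P (S (j+1) ⁻¹' (Bs t))) := by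
    intro s t
    have hre : f1 s ∩ f2 t =
        ((fun ω (k : ℕ) => ξ k ω) ⁻¹' ((fun v : ℕ → 𝕊 => v i) ⁻¹' {s} ∩ (fun v : ℕ → 𝕊 => v j) ⁻¹' {t}))
        ∩ ((fun ω (k : ℕ) => S k ω) ⁻¹' ((fun w : ℕ → ℝ => w (i+1)) ⁻¹' (As s) ∩ (fun w : ℕ → ℝ => w (j+1)) ⁻¹' (Bs t))) := by
      ext ω
      simp only [hf1, hf2, Set.mem_inter_iff, Set.mem_preimage, Set.mem_singleton_iff]
      tauto
    rw [hre, hfact _ _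
      (((measurable_pi_apply i) (measurableSet_singleton s)).inter ((measurable_pi_apply j) (measurableSet_singleton t)))
      (((measurable_pi_apply (i+1)) (hAsm s)).inter ((measurable_pi_apply (j+1)) (hBsm t)))]
    have hxi : P ((fun ω (k : ℕ) => ξ k ω) ⁻¹' ((fun v : ℕ → 𝕊 => v i) ⁻¹' {s} ∩ (fun v : ℕ → 𝕊 => v j) ⁻¹' {t}))
        = P (ξ i ⁻¹' {s}) * P (ξ j ⁻¹' {t}) := by
      have h := (indepFun_iff_measure_inter_preimage_eq_mul.mp (hξindep.indepFun hij))
        {s} {t} (measurableSet_singleton s) (measurableSet_singleton t)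
      exact h
    have hSS : P ((fun ω (k : ℕ) => S k ω) ⁻¹' ((fun w : ℕ → ℝ => w (i+1)) ⁻¹' (As s) ∩ (fun w : ℕ → ℝ => w (j+1)) ⁻¹' (Bs t)))
        = P (S (i+1) ⁻¹' (As s)) * P (S (j+1) ⁻¹' (Bs t)) := by
      have hij' : i + 1 ≠ j + 1 := by omega
      have h := (indepFun_iff_measure_inter_preimage_eq_mul.mp (hSindep.indepFun hij'))
        (As s) (Bs t) (hAsm s) (hBsm t)
      exact h
    rw [hxi, hSS]
    ring
  -- disjointness
  have hdisj1 : Pairwise (Function.onFun Disjoint f1) := by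
    intro s s' hss'
    simp only [Function.onFun, hf1]
    rw [Set.disjoint_left]
    rintro ω ⟨h1, -⟩ ⟨h2, -⟩
    exact hss' (h1.symm.trans h2)
  have hdisj2 : Pairwise (Function.onFun Disjoint f2) := by
    intro t t' htt'
    simp only [Function.onFun, hf2]
    rw [Set.disjoint_left]
    rintro ω ⟨h1, -⟩ ⟨h2, -⟩
    exact htt' (h1.symm.trans h2)
  have hdisj12 : Pairwise (Function.onFun Disjoint (fun st : 𝕊 × 𝕊 => f1 st.1 ∩ f2 st.2)) := by
    rintro ⟨s, t⟩ ⟨s', t'⟩ hne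
    simp only [Function.onFun]
    rw [Set.disjoint_left]
    rintro ω ⟨⟨h1, -⟩, ⟨h2, -⟩⟩ ⟨⟨h3, -⟩, ⟨h4, -⟩⟩
    exact hne (Prod.ext (h1.symm.trans h3) (h2.symm.trans h4))
  -- cross intersection
  have hcross : (⋃ s, f1 s) ∩ (⋃ t, f2 t) = ⋃ st : 𝕊 × 𝕊, f1 st.1 ∩ f2 st.2 := by
    ext ω
    simp only [Set.mem_inter_iff, Set.mem_iUnion, Prod.exists]
    constructor
    · rintro ⟨⟨s, hs⟩, ⟨t, ht⟩⟩; exact ⟨s, t, hs, ht⟩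
    · rintro ⟨s, t, hs, ht⟩; exact ⟨⟨s, hs⟩, ⟨t, ht⟩⟩
  rw [hU1, hU2, hcross]
  rw [measure_iUnion hdisj12 (fun st => (hf1m st.1).inter (hf2m st.2)),
    measure_iUnion hdisj1 hf1m, measure_iUnion hdisj2 hf2m]
  rw [tsum_fintype, tsum_fintype, tsum_fintype]
  have hP1 : ∀ s, P (f1 s) = P (ξ i ⁻¹' {s}) * P (S (i+1) ⁻¹' (As s)) :=
    fun s => hsingle i s (As s) (hAsm s)
  have hP2 : ∀ t, P (f2 t) = P (ξ j ⁻¹' {t}) * P (S (j+1) ⁻¹' (Bs t)) :=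
    fun t => hsingle j t (Bs t) (hBsm t)
  simp only [hP1, hP2]
  rw [Finset.sum_mul_sum]
  rw [Fintype.sum_prod_type]
  congr 1
  ext s
  congr 1
  ext t
  exact hdouble s t



lemma tendsto_succ_sub_div {T : ℕ → ℝ} {θ : ℝ}
    (h1 : Tendsto (fun n => T n / n) atTop (𝓝 θ)) :
    Tendsto (fun n => (T (n+1) - T n) / n) atTop (𝓝 0) := by
  have h3 : Tendsto (fun n : ℕ => T (n+1) / (n+1)) atTop (𝓝 θ) := by
    have h := h1.comp (tendsto_add_atTop_nat 1)
    apply h.congr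
    intro n
    simp [Function.comp]
  have h4 : Tendsto (fun n : ℕ => ((n:ℝ)+1)/n) atTop (𝓝 1) := by
    have h5 : Tendsto (fun n : ℕ => 1 + 1/(n:ℝ)) atTop (𝓝 (1 + 0)) :=
      tendsto_const_nhds.add tendsto_one_div_atTop_nhds_zero_nat
    rw [add_zero] at h5
    apply h5.congr'
    filter_upwards [eventually_ge_atTop 1] with n hn
    have hn0 : (n:ℝ) ≠ 0 := by positivity
    field_simp
  have h5 : Tendsto (fun n : ℕ => T (n+1)/(n+1) * (((n:ℝ)+1)/n)) atTop (𝓝 (θ * 1)) :=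
    h3.mul h4
  rw [mul_one] at h5
  have h6 : Tendsto (fun n : ℕ => T (n+1)/n) atTop (𝓝 θ) := by
    apply h5.congr'
    filter_upwards [eventually_ge_atTop 1] with n hn
    have hn0 : (n:ℝ) ≠ 0 := by positivity
    have hn1 : (n:ℝ)+1 ≠ 0 := by positivity
    push_cast
    field_simp
  have h7 := h6.sub h1
  rw [sub_self] at h7
  apply h7.congr
  intro n
  rw [sub_div]

lemma tendsto_atTop_of_avg {T : ℕ → ℝ} {θ : ℝ} (hθ : 0 < θ)
    (h1 : Tendsto (fun n => T n / n) atTop (𝓝 θ)) :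
    Tendsto T atTop atTop := by
  have h2 : ∀ᶠ n : ℕ in atTop, θ/2 < T n / n :=
    h1.eventually (eventually_gt_nhds (by linarith))
  refine tendsto_atTop_mono' atTop (f₁ := fun n : ℕ => (θ/2) * n) ?_ ?_
  · filter_upwards [h2, eventually_ge_atTop 1] with n hn hn1
    have hn0 : (0:ℝ) < n := by positivity
    calc (θ/2) * n ≤ (T n / n) * n := mul_le_mul_of_nonneg_right hn.le hn0.le
    _ = T n := by field_simp
  · skip
    exact Tendsto.const_mul_atTop (by linarith) tendsto_natCast_atTop_atTop

lemma tendsto_atBot_of_avg {E : ℕ → ℝ} {c : ℝ} (hc : c < 0)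
    (h1 : Tendsto (fun n => E n / n) atTop (𝓝 c)) :
    Tendsto E atTop atBot := by
  have h2 : ∀ᶠ n : ℕ in atTop, E n / n < c/2 :=
    h1.eventually (eventually_lt_nhds (by linarith))
  refine tendsto_atBot_mono' atTop (f₁ := fun n : ℕ => (c/2) * n) ?_ ?_
  · filter_upwards [h2, eventually_ge_atTop 1] with n hn hn1
    have hn0 : (0:ℝ) < n := by positivity
    calc E n = (E n / n) * n := by field_simp
    _ ≤ (c/2) * n := mul_le_mul_of_nonneg_right hn.le hn0.le
  · have h4 : Tendsto (fun n : ℕ => -((-(c/2)) * (n:ℝ))) atTop atBot :=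
      tendsto_neg_atTop_atBot.comp
        (Tendsto.const_mul_atTop (by linarith) tendsto_natCast_atTop_atTop)
    apply h4.congr
    intro n
    simp [Function.comp]


/-- Time-invariant special case: a randomly switched time-invariant system with multiple
Lyapunov functions `V_i`, constant decay/growth rates `λ_i`, common jump factor `μ`, and
renewal-process switching with i.i.d. modes, is almost surely attractive under the
average drift condition `Σ_i p_i λ_i + (ln μ)/θ < 0`. -/
theorem stmt_16 {Ω : Type*} [MeasurableSpace Ω] (P : Measure Ω) [IsProbabilityMeasure P]
    {𝕊 : Type*} [Fintype 𝕊] [MeasurableSpace 𝕊] [MeasurableSingletonClass 𝕊] (n : ℕ)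
    -- the i.i.d. dwell times
    (S : ℕ → Ω → ℝ) (hSmeas : ∀ k, Measurable (S k))
    (hSindep : iIndepFun S P)
    (hSident : ∀ k ≥ 1, IdentDistrib (S k) (S 1) P P)
    (hSpos : ∀ᵐ ω ∂P, 0 < S 1 ω)
    (hSint : Integrable (S 1) P)
    (θ : ℝ) (hθpos : 0 < θ) (hθ : (∫ ω, S 1 ω ∂P) = θ)
    -- the i.i.d. modes, independent of the dwell times
    (ξ : ℕ → Ω → 𝕊) (hξmeas : ∀ k, Measurable (ξ k))
    (hξindep : iIndepFun ξ P)
    (hξident : ∀ k, IdentDistrib (ξ k) (ξ 0) P P)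
    (hξS : IndepFun (fun ω k => ξ k ω) (fun ω k => S k ω) P)
    (p : 𝕊 → ℝ) (hp : ∀ i, (P {ω | ξ 0 ω = i}).toReal = p i)
    -- the mode-dependent constant rates, the jump factor, and the drift condition
    (lam : 𝕊 → ℝ) (μ : ℝ) (hμ : 1 ≤ μ)
    (hdrift : (∑ i : 𝕊, p i * lam i) + Real.log μ / θ < 0)
    -- class-K∞ sandwich functions
    (α₁ α₂ : ℝ → ℝ) (hα₁ : IsClassKInf α₁) (hα₂ : IsClassKInf α₂)
    -- pathwise trajectory and Lyapunov functions
    (x : Ω → ℝ → EuclideanSpace ℝ (Fin n))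
    (V : Ω → 𝕊 → EuclideanSpace ℝ (Fin n) → ℝ)
    (hx_cont : ∀ᵐ ω ∂P, ContinuousOn (x ω) (Set.Ici 0))
    (hsandwich : ∀ᵐ ω ∂P, ∀ i, ∀ y : EuclideanSpace ℝ (Fin n),
      α₁ ‖y‖ ≤ V ω i y ∧ V ω i y ≤ α₂ ‖y‖)
    (hμbound : ∀ᵐ ω ∂P, ∀ i j, ∀ y : EuclideanSpace ℝ (Fin n), V ω i y ≤ μ * V ω j y)
    -- Lyapunov condition: decay along each dwell interval
    (hV_cont : ∀ᵐ ω ∂P, ∀ k, ContinuousOn (fun s => V ω (ξ k ω) (x ω s))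
      (Set.Icc (renewalTime S k ω) (renewalTime S (k + 1) ω)))
    (hV_diff : ∀ᵐ ω ∂P, ∀ k, DifferentiableOn ℝ (fun s => V ω (ξ k ω) (x ω s))
      (Set.Ioo (renewalTime S k ω) (renewalTime S (k + 1) ω)))
    (hV_deriv : ∀ᵐ ω ∂P, ∀ k,
      ∀ s ∈ Set.Ioo (renewalTime S k ω) (renewalTime S (k + 1) ω),
        deriv (fun s' => V ω (ξ k ω) (x ω s')) s ≤ lam (ξ k ω) * V ω (ξ k ω) (x ω s)) :
    ∀ᵐ ω ∂P, Filter.Tendsto (fun s => x ω s) Filter.atTop (nhds 0) := by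
  have hμ0 : (0:ℝ) < μ := lt_of_lt_of_le one_pos hμ
  rcases isEmpty_or_nonempty 𝕊 with hemp | hne
  · exfalso
    have h1 : (∑ i : 𝕊, p i * lam i) = 0 := by simp
    have h2 : 0 ≤ Real.log μ / θ := div_nonneg (Real.log_nonneg hμ) hθpos.le
    rw [h1, zero_add] at hdrift
    linarith
  have hlam_meas : Measurable lam := measurable_of_countable lam
  obtain ⟨L0, hL0'⟩ := Finite.exists_le (fun s : 𝕊 => |lam s|)
  set L : ℝ := max L0 0 with hLdef
  have hL : ∀ s, |lam s| ≤ L := fun s => le_trans (hL0' s) (le_max_left _ _)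
  have hL0 : (0:ℝ) ≤ L := le_max_right _ _
  set Y : ℕ → Ω → ℝ := fun k ω => lam (ξ k ω) * S (k+1) ω with hYdef
  have hYmeas : ∀ k, Measurable (Y k) := fun k =>
    (hlam_meas.comp (hξmeas k)).mul (hSmeas (k+1))
  have hpair_indep : ∀ k, IndepFun (ξ k) (S (k+1)) P := by
    intro k
    exact hξS.comp (measurable_pi_apply k) (measurable_pi_apply (k+1))
  have hpair_ident : ∀ k, IdentDistrib (fun ω => (ξ k ω, S (k+1) ω))
      (fun ω => (ξ 0 ω, S 1 ω)) P P := by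
    intro k
    refine ⟨((hξmeas k).prodMk (hSmeas (k+1))).aemeasurable,
      ((hξmeas 0).prodMk (hSmeas 1)).aemeasurable, ?_⟩
    rw [(indepFun_iff_map_prod_eq_prod_map_map (hξmeas k).aemeasurable
        (hSmeas (k+1)).aemeasurable).mp (hpair_indep k),
      (indepFun_iff_map_prod_eq_prod_map_map (hξmeas 0).aemeasurable
        (hSmeas 1).aemeasurable).mp (hpair_indep 0)]
    rw [(hξident k).map_eq, (hSident (k+1) (by omega)).map_eq]
  have hφmeas : Measurable (fun q : 𝕊 × ℝ => lam q.1 * q.2) :=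
    (hlam_meas.comp measurable_fst).mul measurable_snd
  have hYident : ∀ k, IdentDistrib (Y k) (Y 0) P P := by
    intro k
    exact (hpair_ident k).comp hφmeas
  have hlamξint : Integrable (fun ω => lam (ξ 0 ω)) P := by
    refine Integrable.mono' (integrable_const L)
      (hlam_meas.comp (hξmeas 0)).aestronglyMeasurable ?_
    filter_upwards with ω
    exact hL _
  have hYint : Integrable (Y 0) P := by
    refine Integrable.mono' (hSint.abs.const_mul L)
      (hYmeas 0).aestronglyMeasurable ?_
    filter_upwards with ω
    rw [hYdef]
    simp only [Real.norm_eq_abs, abs_mul]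
    exact mul_le_mul_of_nonneg_right (hL _) (abs_nonneg _)
  have hElam : (∫ ω, lam (ξ 0 ω) ∂P) = ∑ i : 𝕊, p i * lam i := by
    have heq : (fun ω => lam (ξ 0 ω))
        = fun ω => ∑ i : 𝕊, Set.indicator {ω' | ξ 0 ω' = i} (fun _ => lam i) ω := by
      ext ω
      rw [Finset.sum_eq_single (ξ 0 ω)]
      · simp [Set.indicator_of_mem, Set.mem_setOf_eq]
      · intro i _ hne
        apply Set.indicator_of_notMem
        simp only [Set.mem_setOf_eq]
        exact fun h => hne h.symm
      · intro h; exact absurd (Finset.mem_univ _) h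
    rw [heq, integral_finset_sum]
    · refine Finset.sum_congr rfl (fun i _ => ?_)
      have hms : MeasurableSet {ω' | ξ 0 ω' = i} := hξmeas 0 (measurableSet_singleton i)
      rw [integral_indicator_const (lam i) hms, smul_eq_mul, ← hp i]
      rfl
    · intro i _
      exact (integrable_const (lam i)).indicator (hξmeas 0 (measurableSet_singleton i))
  have hEY : (∫ ω, Y 0 ω ∂P) = (∑ i : 𝕊, p i * lam i) * θ := by
    have hind : IndepFun (fun ω => lam (ξ 0 ω)) (S 1) P :=
      (hpair_indep 0).comp hlam_meas measurable_id
    rw [hYdef]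
    have h2 := hind.integral_mul_eq_mul_integral hlamξint.aestronglyMeasurable hSint.aestronglyMeasurable
    have h3 : ((fun ω => lam (ξ 0 ω)) * S 1) = fun ω => lam (ξ 0 ω) * S (0+1) ω := rfl
    rw [h3] at h2
    rw [h2, hElam, hθ]
  -- SLLN for S
  have hSLLN_S : ∀ᵐ ω ∂P, Tendsto (fun n : ℕ => (∑ j ∈ Finset.range n, S (j+1) ω)/n)
      atTop (𝓝 θ) := by
    have h := strong_law_ae_real (fun j ω => S (j+1) ω) (by simpa using hSint)
      (fun i j hij => hSindep.indepFun (by omega))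
      (fun i => hSident (i+1) (by omega))
    filter_upwards [h] with ω hω
    have hint : (∫ ω', S (0+1) ω' ∂P) = θ := hθ
    rw [hint] at hω
    exact hω
  -- SLLN for Y
  have hSLLN_Y : ∀ᵐ ω ∂P, Tendsto (fun n : ℕ => (∑ j ∈ Finset.range n, Y j ω)/n)
      atTop (𝓝 ((∑ i : 𝕊, p i * lam i) * θ)) := by
    have h := strong_law_ae_real Y hYint
      (fun i j hij => indep_mul_aux P S hSmeas hSindep ξ hξmeas hξindep hξS lam hij)
      hYident
    filter_upwards [h] with ω hω
    rw [hEY] at hω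
    exact hω
  -- positivity of all dwell times
  have hSpos_all : ∀ᵐ ω ∂P, ∀ k : ℕ, 0 < S (k+1) ω := by
    rw [ae_all_iff]
    intro k
    have h0 : P {ω | ¬ 0 < S 1 ω} = 0 := by
      rw [← ae_iff]; exact hSpos
    have hset : ∀ (m : ℕ), {ω | ¬ 0 < S m ω} = S m ⁻¹' Set.Iic 0 := by
      intro m; ext ω; simp [not_lt]
    rw [ae_iff, hset]
    have h1 := (hSident (k+1) (by omega)).measure_mem_eq (measurableSet_Iic (a := (0:ℝ)))
    rw [h1, ← hset 1, h0]
  -- drift constant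
  have hc : Real.log μ + (∑ i : 𝕊, p i * lam i) * θ + L * 0 < 0 := by
    have h1 := mul_lt_mul_of_pos_right hdrift hθpos
    rw [zero_mul, add_mul, div_mul_cancel₀ _ hθpos.ne'] at h1
    linarith
  -- pointwise argument
  filter_upwards [hSpos_all, hSLLN_S, hSLLN_Y, hsandwich, hμbound, hV_cont, hV_diff,
    hV_deriv] with ω hpos hTω hYω hsand hμb hVc hVd hVder
  set t : ℕ → ℝ := fun k => renewalTime S k ω with htdef
  have ht0 : t 0 = 0 := by simp [htdef, renewalTime]
  have htsucc : ∀ k, t (k+1) = t k + S (k+1) ω := by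
    intro k
    simp only [htdef, renewalTime]
    exact Finset.sum_Icc_succ_top (by omega) _
  have htrange : ∀ m : ℕ, t m = ∑ j ∈ Finset.range m, S (j+1) ω := by
    intro m
    induction m with
    | zero => simpa using ht0
    | succ m ih => rw [htsucc, ih, Finset.sum_range_succ]
  have htmono : StrictMono t :=
    strictMono_nat_of_lt_succ (fun k => by rw [htsucc]; linarith [hpos k])
  have ht_nonneg : ∀ k, 0 ≤ t k := by
    intro k
    rw [← ht0]
    exact htmono.monotone (Nat.zero_le k)
  have htop : Tendsto t atTop atTop := by
    apply tendsto_atTop_of_avg hθpos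
    have heq : (fun m : ℕ => t m / m)
        = fun m : ℕ => (∑ j ∈ Finset.range m, S (j+1) ω)/m := by
      ext m; rw [htrange]
    rw [heq]
    exact hTω
  -- the exponent sequence
  set c : ℕ → ℝ := fun k => k * Real.log μ + ∑ j ∈ Finset.range k, Y j ω with hcdef
  set E : ℕ → ℝ := fun k => c k + L * S (k+1) ω with hEdef
  have hS1n : Tendsto (fun m : ℕ => S (m+1) ω / m) atTop (𝓝 0) := by
    have h8 := tendsto_succ_sub_div (T := fun m => ∑ j ∈ Finset.range m, S (j+1) ω) hTω
    apply h8.congr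
    intro m
    simp only [Finset.sum_range_succ]
    rw [add_sub_cancel_left]
  have hEbot : Tendsto E atTop atBot := by
    apply tendsto_atBot_of_avg hc
    have h9 : Tendsto (fun m : ℕ => Real.log μ + (∑ j ∈ Finset.range m, Y j ω)/m
        + L * (S (m+1) ω / m)) atTop
        (𝓝 (Real.log μ + (∑ i : 𝕊, p i * lam i) * θ + L * 0)) :=
      (tendsto_const_nhds.add hYω).add (hS1n.const_mul L)
    apply h9.congr'
    filter_upwards [eventually_ge_atTop 1] with m hm
    have hm0 : (m:ℝ) ≠ 0 := by positivity
    simp only [hEdef, hcdef]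
    field_simp
  -- nonnegativity of V
  have hVnonneg : ∀ i y, 0 ≤ V ω i y := by
    intro i y
    exact le_trans (hα₁.2.2.2.1 ‖y‖ (norm_nonneg y)) (hsand i y).1
  -- Gronwall on each interval
  have claim1 : ∀ k, ∀ s ∈ Set.Icc (t k) (t (k+1)),
      V ω (ξ k ω) (x ω s) ≤ V ω (ξ k ω) (x ω (t k))
        * Real.exp (lam (ξ k ω) * (s - t k)) := by
    intro k
    exact gronwall_aux_s16 (hVc k) (hVd k) (hVder k)
  -- chained bound at renewal times
  have claim3 : ∀ k, V ω (ξ k ω) (x ω (t k)) ≤ V ω (ξ 0 ω) (x ω (t 0)) * Real.exp (c k) := by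
    intro k
    induction k with
    | zero => simp [hcdef]
    | succ k ih =>
      have h1 : V ω (ξ (k+1) ω) (x ω (t (k+1))) ≤ μ * V ω (ξ k ω) (x ω (t (k+1))) :=
        hμb (ξ (k+1) ω) (ξ k ω) (x ω (t (k+1)))
      have h2 : V ω (ξ k ω) (x ω (t (k+1))) ≤ V ω (ξ k ω) (x ω (t k))
          * Real.exp (lam (ξ k ω) * (t (k+1) - t k)) := by
        apply claim1 k
        exact Set.right_mem_Icc.mpr (htmono (lt_add_one k)).le
      have h3 : t (k+1) - t k = S (k+1) ω := by rw [htsucc]; ring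
      rw [h3] at h2
      have hexp_pos : (0:ℝ) < Real.exp (lam (ξ k ω) * S (k+1) ω) := Real.exp_pos _
      have h4 : V ω (ξ k ω) (x ω (t k)) * Real.exp (lam (ξ k ω) * S (k+1) ω)
          ≤ (V ω (ξ 0 ω) (x ω (t 0)) * Real.exp (c k)) * Real.exp (lam (ξ k ω) * S (k+1) ω) :=
        mul_le_mul_of_nonneg_right ih hexp_pos.le
      have h5 : μ * V ω (ξ k ω) (x ω (t (k+1)))
          ≤ μ * ((V ω (ξ 0 ω) (x ω (t 0)) * Real.exp (c k)) * Real.exp (lam (ξ k ω) * S (k+1) ω)) :=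
        mul_le_mul_of_nonneg_left (le_trans h2 h4) hμ0.le
      have h6 : μ * ((V ω (ξ 0 ω) (x ω (t 0)) * Real.exp (c k)) * Real.exp (lam (ξ k ω) * S (k+1) ω))
          = V ω (ξ 0 ω) (x ω (t 0)) * Real.exp (c (k+1)) := by
        have hck : c (k+1) = c k + (Real.log μ + lam (ξ k ω) * S (k+1) ω) := by
          simp only [hcdef, hYdef, Finset.sum_range_succ]
          push_cast
          ring
        rw [hck, Real.exp_add (c k), Real.exp_add (Real.log μ), Real.exp_log hμ0]
        ring
      calc V ω (ξ (k+1) ω) (x ω (t (k+1))) ≤ μ * V ω (ξ k ω) (x ω (t (k+1))) := h1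
        _ ≤ μ * ((V ω (ξ 0 ω) (x ω (t 0)) * Real.exp (c k)) * Real.exp (lam (ξ k ω) * S (k+1) ω)) := h5
        _ = V ω (ξ 0 ω) (x ω (t 0)) * Real.exp (c (k+1)) := h6
  -- limit of the bound
  set A0 : ℝ := V ω (ξ 0 ω) (x ω (t 0)) with hA0def
  have hA0 : 0 ≤ A0 := hVnonneg _ _
  have hexp0 : Tendsto (fun k => A0 * Real.exp (E k)) atTop (𝓝 0) := by
    have h7 : Tendsto (fun k => Real.exp (E k)) atTop (𝓝 0) :=
      Real.tendsto_exp_atBot.comp hEbot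
    have h8 : Tendsto (fun k => A0 * Real.exp (E k)) atTop (𝓝 (A0 * 0)) :=
      h7.const_mul A0
    rw [mul_zero] at h8
    exact h8
  -- final: tendsto
  rw [NormedAddCommGroup.tendsto_nhds_zero]
  intro ε hε
  have hε' : (ε:ℝ) ∈ Set.Ici (0:ℝ) := le_of_lt hε
  have hδ : 0 < α₁ ε := by
    rw [← hα₁.2.2.1]
    exact hα₁.2.1 (Set.self_mem_Ici) hε' hε
  obtain ⟨K, hK⟩ := Filter.eventually_atTop.mp (hexp0.eventually (eventually_lt_nhds hδ))
  filter_upwards [eventually_ge_atTop (max (t K) 0)] with s hs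
  have hs0 : (0:ℝ) ≤ s := le_trans (le_max_right _ _) hs
  have hsK : t K ≤ s := le_trans (le_max_left _ _) hs
  -- locate s in a renewal interval
  obtain ⟨m, hm⟩ := (htop.eventually (eventually_gt_atTop s)).exists
  have hexists : ∃ k : ℕ, s < t (k+1) := ⟨m, lt_of_lt_of_le hm (htmono.monotone (Nat.le_succ m))⟩
  obtain ⟨k, hk2, hk1⟩ : ∃ k : ℕ, s < t (k+1) ∧ t k ≤ s := by
    refine ⟨Nat.find hexists, Nat.find_spec hexists, ?_⟩
    by_cases h0 : Nat.find hexists = 0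
    · rw [h0, ht0]; exact hs0
    · obtain ⟨k', hk'⟩ := Nat.exists_eq_succ_of_ne_zero h0
      rw [hk']
      have hmin := Nat.find_min hexists (m := k') (by omega)
      push_neg at hmin
      exact hmin
  have hkK : K ≤ k := by
    have h1 : t K < t (k+1) := lt_of_le_of_lt hsK hk2
    have := htmono.lt_iff_lt.mp h1
    omega
  -- assemble the bound
  have hb1 : α₁ ‖x ω s‖ ≤ V ω (ξ k ω) (x ω s) := (hsand _ _).1
  have hb2 : V ω (ξ k ω) (x ω s) ≤ V ω (ξ k ω) (x ω (t k))
      * Real.exp (lam (ξ k ω) * (s - t k)) := claim1 k s ⟨hk1, hk2.le⟩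
  have hb3 : lam (ξ k ω) * (s - t k) ≤ L * S (k+1) ω := by
    have hst : 0 ≤ s - t k := by linarith
    have hstS : s - t k ≤ S (k+1) ω := by
      have h := htsucc k
      linarith
    calc lam (ξ k ω) * (s - t k) ≤ |lam (ξ k ω)| * (s - t k) :=
          mul_le_mul_of_nonneg_right (le_abs_self _) hst
      _ ≤ L * (s - t k) := mul_le_mul_of_nonneg_right (hL _) hst
      _ ≤ L * S (k+1) ω := mul_le_mul_of_nonneg_left hstS hL0
  have hb4 : V ω (ξ k ω) (x ω (t k)) * Real.exp (lam (ξ k ω) * (s - t k))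
      ≤ V ω (ξ k ω) (x ω (t k)) * Real.exp (L * S (k+1) ω) :=
    mul_le_mul_of_nonneg_left (Real.exp_le_exp.mpr hb3) (hVnonneg _ _)
  have hb5 : V ω (ξ k ω) (x ω (t k)) * Real.exp (L * S (k+1) ω)
      ≤ (A0 * Real.exp (c k)) * Real.exp (L * S (k+1) ω) :=
    mul_le_mul_of_nonneg_right (claim3 k) (Real.exp_pos _).le
  have hb6 : (A0 * Real.exp (c k)) * Real.exp (L * S (k+1) ω) = A0 * Real.exp (E k) := by
    have hEk : E k = c k + L * S (k+1) ω := rfl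
    rw [hEk, Real.exp_add (c k), ← mul_assoc]
  have hchain : α₁ ‖x ω s‖ < α₁ ε := by
    have := hK k hkK
    calc α₁ ‖x ω s‖ ≤ V ω (ξ k ω) (x ω s) := hb1
      _ ≤ V ω (ξ k ω) (x ω (t k)) * Real.exp (lam (ξ k ω) * (s - t k)) := hb2
      _ ≤ V ω (ξ k ω) (x ω (t k)) * Real.exp (L * S (k+1) ω) := hb4
      _ ≤ (A0 * Real.exp (c k)) * Real.exp (L * S (k+1) ω) := hb5
      _ = A0 * Real.exp (E k) := hb6
      _ < α₁ ε := this
  by_contra hcon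
  push_neg at hcon
  have : α₁ ε ≤ α₁ ‖x ω s‖ :=
    hα₁.2.1.monotoneOn hε' (norm_nonneg _) hcon
  linarith
end
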